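/- Let r, γ ≥ 0 and α̃ > 0 be constants, A a finite measure space, and Q : Ω × A → ℝ jointly measurable such that for each a, Q(·,a) is sub-Gaussian with mean μ(a) and variance proxy σ²(a), with all relevant integrals finite. Define the soft Bellman optimality backup T*Q = r + γ · E_ω[ α̃ log ∫_A exp(Q(ω,a)/α̃) da ]. Then T*Q ≤ r + γ · α̃ · log ∫_A exp( μ(a)/α̃ + σ²(a)/(2α̃²) ) da. -/

import Mathlib

open MeasureTheory Real

/-- Theorem 1 of the paper, fixed state-action pair: the soft Bellman
optimality backup `T*Q = r + γ E_ω[α̃ log ∫ exp(Q(ω,a)/α̃) da]` of a sub-Gaussian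
critic satisfies `T*Q ≤ r + γ α̃ log ∫ exp(μ(a)/α̃ + σ²(a)/(2α̃²)) da`. -/
theorem overestimation_quantification {Ω A : Type*} [MeasurableSpace Ω] [MeasurableSpace A]
    (P : Measure Ω) [IsProbabilityMeasure P] (ν : Measure A) [IsFiniteMeasure ν]
    (r γ alpha : ℝ) (hr : 0 ≤ r) (hγ : 0 ≤ γ) (halpha : 0 < alpha)
    (Q : Ω → A → ℝ) (μ σ2 : A → ℝ)
    (hmeas : Measurable (Function.uncurry Q)) (hμ : Measurable μ) (hσ2 : Measurable σ2)
    (hmean : ∀ a, ∫ ω, Q ω a ∂P = μ a)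
    (hsub : ∀ a, ∀ l : ℝ,
      ∫ ω, Real.exp (l * Q ω a) ∂P ≤ Real.exp (l * μ a + l ^ 2 * σ2 a / 2))
    (hint : Integrable (Function.uncurry fun ω a => Real.exp (Q ω a / alpha)) (P.prod ν))
    (hlogint : Integrable (fun ω => Real.log (∫ a, Real.exp (Q ω a / alpha) ∂ν)) P)
    (hrhs : Integrable (fun a => Real.exp (μ a / alpha + σ2 a / (2 * alpha ^ 2))) ν) :
    r + γ * ∫ ω, alpha * Real.log (∫ a, Real.exp (Q ω a / alpha) ∂ν) ∂P
      ≤ r + γ * (alpha * Real.log (∫ a, Real.exp (μ a / alpha + σ2 a / (2 * alpha ^ 2)) ∂ν)) := by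
  rcases eq_or_ne ν 0 with hν | hν
  · subst hν; simp
  haveI : NeZero ν := ⟨hν⟩
  set I : Ω → ℝ := fun ω => ∫ a, Real.exp (Q ω a / alpha) ∂ν with hIdef
  -- integrability of slices and of I
  have hslice : ∀ᵐ ω ∂P, Integrable (fun a => Real.exp (Q ω a / alpha)) ν :=
    hint.prod_right_ae
  have hIpos : ∀ᵐ ω ∂P, 0 < I ω := by
    filter_upwards [hslice] with ω h using integral_exp_pos h
  have hI_int : Integrable I P := hint.integral_prod_left
  set c : ℝ := ∫ ω, I ω ∂P with hcdef
  -- c > 0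
  have hc : 0 < c := by
    rw [hcdef, integral_pos_iff_support_of_nonneg_ae (hIpos.mono fun ω h => h.le) hI_int]
    have hsupp : ∀ᵐ ω ∂P, ω ∈ Function.support I := hIpos.mono fun ω h => h.ne'
    have hcompl : P (Function.support I)ᶜ = 0 := ae_iff.mp hsupp
    by_contra hle
    push_neg at hle
    have h0 : P (Function.support I) = 0 := le_antisymm hle zero_le
    have hle1 : P Set.univ ≤ P (Function.support I) + P (Function.support I)ᶜ := by
      simpa [Set.union_compl_self] using
        measure_union_le (μ := P) (Function.support I) (Function.support I)ᶜ
    rw [measure_univ, h0, hcompl, add_zero] at hle1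
    exact one_ne_zero (le_antisymm hle1 zero_le)
  -- Jensen via tangent line: ∫ log I ≤ log c
  have hjensen : ∫ ω, Real.log (I ω) ∂P ≤ Real.log c := by
    have hbound : ∀ᵐ ω ∂P, Real.log (I ω) ≤ I ω / c - 1 + Real.log c := by
      filter_upwards [hIpos] with ω h
      have h1 : Real.log (I ω / c) ≤ I ω / c - 1 :=
        Real.log_le_sub_one_of_pos (div_pos h hc)
      rw [Real.log_div h.ne' hc.ne'] at h1
      linarith
    have h1 : Integrable (fun ω => I ω / c - 1) P :=
      (hI_int.div_const c).sub (integrable_const 1)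
    have h2 : Integrable (fun ω => I ω / c) P := hI_int.div_const c
    have hrint : Integrable (fun ω => I ω / c - 1 + Real.log c) P :=
      h1.add (integrable_const _)
    calc ∫ ω, Real.log (I ω) ∂P ≤ ∫ ω, (I ω / c - 1 + Real.log c) ∂P :=
          integral_mono_ae hlogint hrint hbound
      _ = c / c - 1 + Real.log c := by
          rw [integral_add h1 (integrable_const _), integral_sub h2 (integrable_const 1),
            integral_div]
          simp [hcdef]
      _ = Real.log c := by rw [div_self hc.ne']; ring
  -- pointwise sub-Gaussian bound on ∫ω exp(Q/α)
  have hpt : ∀ a, ∫ ω, Real.exp (Q ω a / alpha) ∂P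
      ≤ Real.exp (μ a / alpha + σ2 a / (2 * alpha ^ 2)) := by
    intro a
    have harg : (1 / alpha) * μ a + (1 / alpha) ^ 2 * σ2 a / 2
        = μ a / alpha + σ2 a / (2 * alpha ^ 2) := by
      field_simp
    calc ∫ ω, Real.exp (Q ω a / alpha) ∂P
        = ∫ ω, Real.exp ((1 / alpha) * Q ω a) ∂P := by
          simp only [one_div, inv_mul_eq_div]
      _ ≤ Real.exp ((1 / alpha) * μ a + (1 / alpha) ^ 2 * σ2 a / 2) := hsub a (1 / alpha)
      _ = Real.exp (μ a / alpha + σ2 a / (2 * alpha ^ 2)) := by rw [harg]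
  -- c ≤ ∫ rhs via Fubini
  have hcle : c ≤ ∫ a, Real.exp (μ a / alpha + σ2 a / (2 * alpha ^ 2)) ∂ν := by
    rw [hcdef, hIdef]
    rw [integral_integral_swap hint]
    exact integral_mono hint.integral_prod_right hrhs hpt
  have hlog : Real.log c ≤ Real.log (∫ a, Real.exp (μ a / alpha + σ2 a / (2 * alpha ^ 2)) ∂ν) :=
    Real.log_le_log hc hcle
  have hmain : ∫ ω, alpha * Real.log (I ω) ∂P
      ≤ alpha * Real.log (∫ a, Real.exp (μ a / alpha + σ2 a / (2 * alpha ^ 2)) ∂ν) := by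
    rw [integral_const_mul]
    exact mul_le_mul_of_nonneg_left (hjensen.trans hlog) halpha.le
  exact add_le_add_right (mul_le_mul_of_nonneg_left hmain hγ) r
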